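/- Among ideal hyperbolic tetrahedra, the regular one has maximal volume: for all real α, β, γ > 0 with α + β + γ = π, one has Λ(α) + Λ(β) + Λ(γ) ≤ 3Λ(π/3), with equality if and only if α = β = γ = π/3. -/

import Mathlib

open MeasureTheory Real Set intervalIntegral

/-- The Lobachevsky function `Λ(θ) = -∫₀^θ log |2 sin t| dt`. -/
noncomputable def lobachevsky (θ : ℝ) : ℝ :=
  -∫ t in (0:ℝ)..θ, Real.log |2 * Real.sin t|

namespace LobAux

/-- The integrand. -/
noncomputable def L (t : ℝ) : ℝ := Real.log |2 * Real.sin t|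

lemma measurable_L : Measurable L :=
  Real.measurable_log.comp ((measurable_const.mul Real.measurable_sin).abs)

lemma contOn_L {s : Set ℝ} (hs : ∀ t ∈ s, Real.sin t ≠ 0) : ContinuousOn L s := by
  apply ContinuousOn.log
  · exact ((continuous_const.mul Real.continuous_sin).abs).continuousOn
  · intro t ht
    simp only [ne_eq, abs_eq_zero, mul_eq_zero, not_or]
    exact ⟨two_ne_zero, hs t ht⟩

lemma integrableOn_neg_log : IntegrableOn (fun x : ℝ => -Real.log x) (Set.Ioc 0 1) := by
  apply integrableOn_deriv_of_nonneg (g := fun x : ℝ => x - x * Real.log x)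
  · exact (continuous_id.sub Real.continuous_mul_log).continuousOn
  · intro x hx
    have hx0 : x ≠ 0 := ne_of_gt hx.1
    have h1 : HasDerivAt (fun y : ℝ => y * Real.log y) (1 * Real.log x + x * x⁻¹) x :=
      (hasDerivAt_id x).mul (Real.hasDerivAt_log hx0)
    have h2 : HasDerivAt (fun y : ℝ => y - y * Real.log y)
        (1 - (1 * Real.log x + x * x⁻¹)) x := (hasDerivAt_id x).sub h1
    convert h2 using 1
    field_simp
    ring
  · intro x hx
    simp only [neg_nonneg]
    exact Real.log_nonpos (le_of_lt hx.1) (le_of_lt hx.2)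

lemma L_int_half : IntervalIntegrable L volume 0 (1/2) := by
  rw [intervalIntegrable_iff_integrableOn_Ioc_of_le (by norm_num)]
  have hmeas : AEStronglyMeasurable L (volume.restrict (Set.Ioc (0:ℝ) (1/2))) :=
    measurable_L.aestronglyMeasurable
  have hg : IntegrableOn (fun x : ℝ => Real.log 2 + -Real.log x) (Set.Ioc 0 (1/2)) := by
    apply Integrable.add
    · exact integrableOn_const measure_Ioc_lt_top.ne
    · exact integrableOn_neg_log.mono_set (Set.Ioc_subset_Ioc_right (by norm_num))
  apply Integrable.mono' hg hmeas
  rw [ae_restrict_iff' measurableSet_Ioc]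
  filter_upwards with x hx
  have hπ4 : Real.pi ≤ 4 := Real.pi_le_four
  have hx2 : x ≤ Real.pi / 2 := by nlinarith [hx.2, Real.pi_gt_three]
  have hsin : 2 / Real.pi * x ≤ Real.sin x := Real.mul_le_sin (le_of_lt hx.1) hx2
  have hπ : 0 < Real.pi := Real.pi_pos
  have h4 : (1:ℝ)/2 ≤ 2 / Real.pi := by
    rw [div_le_div_iff₀ (by norm_num) hπ]
    linarith
  have h5 : (1/2:ℝ) * x ≤ 2 / Real.pi * x := mul_le_mul_of_nonneg_right h4 (le_of_lt hx.1)
  have hsinpos : 0 < Real.sin x := by linarith [hx.1]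
  have hlow : x ≤ 2 * Real.sin x := by linarith
  have hup : 2 * Real.sin x ≤ 2 := by nlinarith [Real.sin_le_one x]
  have habs : |2 * Real.sin x| = 2 * Real.sin x := abs_of_pos (by positivity)
  have hlogx : Real.log x ≤ 0 := Real.log_nonpos (le_of_lt hx.1) (by linarith [hx.2])
  rw [Real.norm_eq_abs]
  rw [abs_le]
  unfold L
  rw [habs]
  constructor
  · have h1 : Real.log x ≤ Real.log (2 * Real.sin x) :=
      Real.log_le_log (by exact hx.1) hlow
    have h2 : (0:ℝ) ≤ Real.log 2 := Real.log_nonneg (by norm_num)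
    linarith
  · have h1 : Real.log (2 * Real.sin x) ≤ Real.log 2 :=
      Real.log_le_log (by positivity) hup
    linarith

lemma L_int {b : ℝ} (hb0 : 0 ≤ b) (hbπ : b < Real.pi) :
    IntervalIntegrable L volume 0 b := by
  rcases le_total b (1/2) with h | h
  · apply L_int_half.mono_set
    rw [Set.uIcc_of_le hb0, Set.uIcc_of_le (by norm_num)]
    exact Set.Icc_subset_Icc le_rfl h
  · apply L_int_half.trans
    apply (contOn_L ?_).intervalIntegrable
    intro t ht
    rw [Set.uIcc_of_le h] at ht
    exact ne_of_gt (Real.sin_pos_of_pos_of_lt_pi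
      (lt_of_lt_of_le (by norm_num) ht.1) (lt_of_le_of_lt ht.2 hbπ))

lemma L_int' {a b : ℝ} (ha : 0 ≤ a) (hab : a ≤ b) (hb : b < Real.pi) :
    IntervalIntegrable L volume a b := by
  apply (L_int (le_trans ha hab) hb).mono_set
  rw [Set.uIcc_of_le hab, Set.uIcc_of_le (le_trans ha hab)]
  exact Set.Icc_subset_Icc ha le_rfl

lemma lob_sub {a b : ℝ} (ha : 0 ≤ a) (hab : a ≤ b) (hb : b < Real.pi) :
    lobachevsky b - lobachevsky a = -∫ t in a..b, L t := by
  have h1 : IntervalIntegrable L volume 0 a := L_int ha (lt_of_le_of_lt hab hb)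
  have h2 : IntervalIntegrable L volume a b := L_int' ha hab hb
  have h3 := intervalIntegral.integral_add_adjacent_intervals h1 h2
  unfold lobachevsky
  unfold L at h3 ⊢
  linarith

lemma sym_lt {α β : ℝ} (hα : 0 < α) (hab : α < β) (hs : α + β < Real.pi) :
    lobachevsky α + lobachevsky β < 2 * lobachevsky ((α + β) / 2) := by
  set m := (α + β) / 2 with hm
  have hβπ : β < Real.pi := by linarith
  have hm0 : 0 < m := by rw [hm]; linarith
  have hαm : α < m := by rw [hm]; linarith
  have hmβ : m < β := by rw [hm]; linarith
  have hmπ2 : m < Real.pi / 2 := by rw [hm]; linarith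
  have hπ : 0 < Real.pi := Real.pi_pos
  have e1 : lobachevsky m - lobachevsky α = -∫ t in α..m, L t :=
    lob_sub (le_of_lt hα) (le_of_lt hαm) (by linarith)
  have e2 : lobachevsky β - lobachevsky m = -∫ t in m..β, L t :=
    lob_sub (le_of_lt hm0) (le_of_lt hmβ) hβπ
  have e3 : (∫ t in m..β, L ((α + β) - t)) = ∫ t in α..m, L t := by
    rw [intervalIntegral.integral_comp_sub_left L (α + β)]
    have ha' : α + β - β = α := by ring
    have hb' : α + β - m = m := by rw [hm]; ring
    rw [ha', hb']
  have hcont1 : IntervalIntegrable L volume m β := L_int' (le_of_lt hm0) (le_of_lt hmβ) hβπ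
  have hcont2 : IntervalIntegrable (fun t => L ((α + β) - t)) volume m β := by
    apply ContinuousOn.intervalIntegrable
    apply (contOn_L (s := Set.Icc α m) ?_).comp
      ((continuous_const.sub continuous_id).continuousOn)
    · intro t ht
      rw [Set.uIcc_of_le (le_of_lt hmβ)] at ht
      exact ⟨by simp; linarith [ht.2], by simp; rw [hm]; linarith [ht.1]⟩
    · intro t ht
      exact ne_of_gt (Real.sin_pos_of_pos_of_lt_pi (lt_of_lt_of_le hα ht.1)
        (lt_of_le_of_lt ht.2 (by linarith)))
  have key : (∫ t in m..β, (L t - L ((α + β) - t))) =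
      2 * lobachevsky m - lobachevsky α - lobachevsky β := by
    rw [intervalIntegral.integral_sub hcont1 hcont2, e3]
    linarith
  have hpos : 0 < ∫ t in m..β, (L t - L ((α + β) - t)) := by
    apply intervalIntegral_pos_of_pos_on (hcont1.sub hcont2) ?_ hmβ
    intro x hx
    have hy0 : 0 < α + β - x := by linarith [hx.2]
    have hyπ : α + β - x < Real.pi := by
      have : m ≤ α + β - x → False := by intro h; rw [hm] at h; linarith [hx.1]
      by_contra h
      push_neg at h
      have hm2 : α + β - x < m := by rw [hm]; linarith [hx.1]
      linarith
    have hsy : 0 < Real.sin (α + β - x) := Real.sin_pos_of_pos_of_lt_pi hy0 hyπ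
    have hsx : 0 < Real.sin x := Real.sin_pos_of_pos_of_lt_pi (by linarith [hx.1]) (by linarith [hx.2])
    have hlt : Real.sin (α + β - x) < Real.sin x := by
      have hdiff := Real.sin_sub_sin x (α + β - x)
      have harg1 : (x - (α + β - x)) / 2 = x - m := by rw [hm]; ring
      have harg2 : (x + (α + β - x)) / 2 = m := by rw [hm]; ring
      rw [harg1, harg2] at hdiff
      have hsinpos : 0 < Real.sin (x - m) := by
        apply Real.sin_pos_of_pos_of_lt_pi (by linarith [hx.1])
        have : x < β := hx.2
        linarith
      have hcospos : 0 < Real.cos m := Real.cos_pos_of_mem_Ioo ⟨by linarith, hmπ2⟩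
      nlinarith
    unfold L
    rw [abs_of_pos (by positivity), abs_of_pos (by positivity)]
    have := Real.log_lt_log (by positivity) (by linarith : 2 * Real.sin (α + β - x) < 2 * Real.sin x)
    linarith
  linarith

lemma psi_diff {m₁ m₂ : ℝ} (h0 : 0 < m₁) (h12 : m₁ ≤ m₂) (h2 : m₂ < Real.pi / 2) :
    (2 * lobachevsky m₂ + lobachevsky (Real.pi - 2 * m₂)) -
      (2 * lobachevsky m₁ + lobachevsky (Real.pi - 2 * m₁))
      = 2 * ∫ t in m₁..m₂, (L (Real.pi - 2 * t) - L t) := by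
  have hπ : 0 < Real.pi := Real.pi_pos
  have eA : lobachevsky m₂ - lobachevsky m₁ = -∫ t in m₁..m₂, L t :=
    lob_sub (le_of_lt h0) h12 (by linarith)
  have eB : lobachevsky (Real.pi - 2 * m₁) - lobachevsky (Real.pi - 2 * m₂) =
      -∫ t in (Real.pi - 2 * m₂)..(Real.pi - 2 * m₁), L t :=
    lob_sub (a := Real.pi - 2 * m₂) (b := Real.pi - 2 * m₁)
      (by linarith) (by linarith) (by linarith)
  have eC : (∫ t in m₁..m₂, L (Real.pi - 2 * t)) =
      2⁻¹ * ∫ t in (Real.pi - 2 * m₂)..(Real.pi - 2 * m₁), L t := by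
    have h1 : (∫ t in m₁..m₂, (fun x => L (Real.pi - x)) (2 * t)) =
        (2:ℝ)⁻¹ • ∫ x in (2*m₁)..(2*m₂), L (Real.pi - x) :=
      intervalIntegral.integral_comp_mul_left (fun x => L (Real.pi - x)) two_ne_zero
    simp only [smul_eq_mul] at h1
    rw [show (∫ t in m₁..m₂, L (Real.pi - 2 * t)) =
        ∫ t in m₁..m₂, (fun x => L (Real.pi - x)) (2 * t) from rfl, h1,
      intervalIntegral.integral_comp_sub_left L Real.pi]
  have hi1 : IntervalIntegrable (fun t => L (Real.pi - 2 * t)) volume m₁ m₂ := by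
    apply ContinuousOn.intervalIntegrable
    apply (contOn_L (s := Set.Icc (Real.pi - 2 * m₂) (Real.pi - 2 * m₁)) ?_).comp
      ((continuous_const.sub (continuous_const.mul continuous_id)).continuousOn)
    · intro t ht
      rw [Set.uIcc_of_le h12] at ht
      exact ⟨by simp; linarith [ht.2], by simp; linarith [ht.1]⟩
    · intro t ht
      exact ne_of_gt (Real.sin_pos_of_pos_of_lt_pi (by linarith [ht.1])
        (by linarith [ht.2]))
  have hi2 : IntervalIntegrable L volume m₁ m₂ := L_int' (le_of_lt h0) h12 (by linarith)
  rw [intervalIntegral.integral_sub hi1 hi2, eC]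
  linarith

lemma cos_pi_div_three' : Real.cos (Real.pi / 3) = 1 / 2 := Real.cos_pi_div_three

lemma integrand_eq {t : ℝ} (ht0 : 0 < t) (ht2 : t < Real.pi / 2) :
    L (Real.pi - 2 * t) - L t = Real.log (2 * Real.cos t) := by
  have hπ : 0 < Real.pi := Real.pi_pos
  have hst : 0 < Real.sin t := Real.sin_pos_of_pos_of_lt_pi ht0 (by linarith)
  have hct : 0 < Real.cos t := Real.cos_pos_of_mem_Ioo ⟨by linarith, ht2⟩
  unfold L
  rw [Real.sin_pi_sub, Real.sin_two_mul]
  rw [abs_of_pos (by positivity), abs_of_pos (by positivity)]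
  rw [show 2 * (2 * Real.sin t * Real.cos t) = (2 * Real.sin t) * (2 * Real.cos t) by ring]
  rw [Real.log_mul (by positivity) (by positivity)]
  ring

lemma integrand_cont {a b : ℝ} (ha : 0 < a) (hab : a ≤ b) (hb : b < Real.pi / 2) :
    IntervalIntegrable (fun t => L (Real.pi - 2 * t) - L t) volume a b := by
  have hπ : 0 < Real.pi := Real.pi_pos
  apply ContinuousOn.intervalIntegrable
  have hsub : Set.uIcc a b ⊆ Set.Ioo 0 (Real.pi / 2) := by
    rw [Set.uIcc_of_le hab]
    intro t ht
    exact ⟨lt_of_lt_of_le ha ht.1, lt_of_le_of_lt ht.2 hb⟩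
  have hcont : ContinuousOn (fun t => L (Real.pi - 2 * t) - L t) (Set.Ioo 0 (Real.pi / 2)) := by
    apply ContinuousOn.sub
    · apply (contOn_L (s := Set.Ioo 0 Real.pi) ?_).comp
        ((continuous_const.sub (continuous_const.mul continuous_id)).continuousOn)
      · intro x hx
        exact ⟨by simp; linarith [hx.2], by simp; linarith [hx.1]⟩
      · intro x hx
        exact ne_of_gt (Real.sin_pos_of_pos_of_lt_pi hx.1 hx.2)
    · apply contOn_L
      intro x hx
      exact ne_of_gt (Real.sin_pos_of_pos_of_lt_pi hx.1 (by linarith [hx.2]))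
  exact hcont.mono hsub

lemma psi_lt {m : ℝ} (h0 : 0 < m) (h2 : m < Real.pi / 2) (hne : m ≠ Real.pi / 3) :
    2 * lobachevsky m + lobachevsky (Real.pi - 2 * m) < 3 * lobachevsky (Real.pi / 3) := by
  have hπ : 0 < Real.pi := Real.pi_pos
  have hπ3 : Real.pi - 2 * (Real.pi / 3) = Real.pi / 3 := by ring
  rcases lt_or_gt_of_ne hne with h | h
  · -- m < π/3
    have hd := psi_diff h0 (le_of_lt h) (by linarith)
    rw [hπ3] at hd
    have hpos : 0 < ∫ t in m..(Real.pi / 3), (L (Real.pi - 2 * t) - L t) := by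
      apply intervalIntegral_pos_of_pos_on (integrand_cont h0 (le_of_lt h) (by linarith)) ?_ h
      intro x hx
      have hx0 : 0 < x := lt_trans h0 hx.1
      have hx2 : x < Real.pi / 2 := by linarith [hx.2]
      rw [integrand_eq hx0 hx2]
      apply Real.log_pos
      have : Real.cos (Real.pi / 3) < Real.cos x :=
        Real.cos_lt_cos_of_nonneg_of_le_pi (le_of_lt hx0) (by linarith) hx.2
      rw [Real.cos_pi_div_three] at this
      linarith
    linarith
  · -- m > π/3
    have hd := psi_diff (by linarith : (0:ℝ) < Real.pi / 3) (le_of_lt h) h2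
    rw [hπ3] at hd
    have hneg : 0 < ∫ t in (Real.pi / 3)..m, (L t - L (Real.pi - 2 * t)) := by
      have hint : IntervalIntegrable (fun t => L t - L (Real.pi - 2 * t)) volume (Real.pi / 3) m := by
        have := (integrand_cont (by linarith : (0:ℝ) < Real.pi / 3) (le_of_lt h) h2).neg
        have heq : (fun t => L t - L (Real.pi - 2 * t)) =
            (fun t => -(L (Real.pi - 2 * t) - L t)) := by funext t; ring
        rw [heq]
        exact this
      apply intervalIntegral_pos_of_pos_on hint ?_ h
      intro x hx
      have hx0 : 0 < x := by linarith [hx.1]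
      have hx2 : x < Real.pi / 2 := hx.2.trans_le (le_of_lt h2) |>.trans_le le_rfl
      have heq := integrand_eq hx0 hx2
      have hneg' : Real.log (2 * Real.cos x) < 0 := by
        apply Real.log_neg
        · have : 0 < Real.cos x := Real.cos_pos_of_mem_Ioo ⟨by linarith, hx2⟩
          linarith
        · have : Real.cos x < Real.cos (Real.pi / 3) :=
            Real.cos_lt_cos_of_nonneg_of_le_pi (by linarith) (by linarith) hx.1
          rw [Real.cos_pi_div_three] at this
          linarith
      linarith
    have hflip : (∫ t in (Real.pi / 3)..m, (L (Real.pi - 2 * t) - L t)) =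
        -∫ t in (Real.pi / 3)..m, (L t - L (Real.pi - 2 * t)) := by
      rw [← intervalIntegral.integral_neg]
      congr 1
      funext t
      ring
    rw [hflip] at hd
    linarith

end LobAux

open LobAux

theorem idealTetrahedron_volume_le_regular {α β γ : ℝ}
    (hα : 0 < α) (hβ : 0 < β) (hγ : 0 < γ) (hsum : α + β + γ = Real.pi) :
    lobachevsky α + lobachevsky β + lobachevsky γ ≤ 3 * lobachevsky (Real.pi / 3) ∧
      (lobachevsky α + lobachevsky β + lobachevsky γ = 3 * lobachevsky (Real.pi / 3) ↔
        α = Real.pi / 3 ∧ β = Real.pi / 3 ∧ γ = Real.pi / 3) := by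
  have hπ : 0 < Real.pi := Real.pi_pos
  set m := (α + β) / 2 with hm
  have hm0 : 0 < m := by rw [hm]; linarith
  have hmlt : m < Real.pi / 2 := by rw [hm]; linarith
  have hγm : γ = Real.pi - 2 * m := by rw [hm]; linarith
  have h1s : α ≠ β → lobachevsky α + lobachevsky β < 2 * lobachevsky m := by
    intro hne
    rcases lt_or_gt_of_ne hne with h | h
    · exact sym_lt hα h (by linarith)
    · have hswap : (β + α) / 2 = m := by rw [hm]; ring
      have := sym_lt hβ h (by linarith)
      rw [hswap] at this
      linarith
  have h1 : lobachevsky α + lobachevsky β ≤ 2 * lobachevsky m := by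
    rcases eq_or_ne α β with he | hne
    · have hmb : m = β := by rw [hm, he]; ring
      rw [he, hmb]
      linarith
    · exact le_of_lt (h1s hne)
  have h2s : m ≠ Real.pi / 3 → 2 * lobachevsky m + lobachevsky γ < 3 * lobachevsky (Real.pi / 3) := by
    intro hne
    rw [hγm]
    exact psi_lt hm0 hmlt hne
  have h2 : 2 * lobachevsky m + lobachevsky γ ≤ 3 * lobachevsky (Real.pi / 3) := by
    rcases eq_or_ne m (Real.pi / 3) with he | hne
    · rw [hγm, he]
      rw [show Real.pi - 2 * (Real.pi / 3) = Real.pi / 3 by ring]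
      linarith
    · exact le_of_lt (h2s hne)
  refine ⟨by linarith, ?_, ?_⟩
  · intro heq
    have hαβ : α = β := by
      by_contra hne
      have := h1s hne
      linarith
    have hmeq : m = Real.pi / 3 := by
      by_contra hne
      have hlt := h2s hne
      have hmα : m = α := by rw [hm, hαβ]; ring
      rw [hmα, hαβ] at hlt
      rw [hαβ] at heq
      linarith
    have hα3 : α = Real.pi / 3 := by
      rw [hm] at hmeq
      linarith [hαβ]
    exact ⟨hα3, by linarith, by linarith⟩
  · rintro ⟨ha, hb, hc⟩
    rw [ha, hb, hc]
    ring
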